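/- arXiv:2304.07861 — 2 statements merged into one kernel-verified Lean document; each statement's English description precedes it below -/
import Mathlib

section
/- Let ẽ be uniformly distributed on the unit ℓ₁-ball B₁^d(1) ⊂ ℝ^d. Then E[‖ẽ‖₂] ≤ 2/√d. -/
open MeasureTheory Set Pointwise intervalIntegral

namespace L1BallAux

variable {d : ℕ}

local notation "E" => EuclideanSpace ℝ (Fin d)

def Sball (d : ℕ) : Set (EuclideanSpace ℝ (Fin d)) := {x | ∑ i, |x i| ≤ 1}

lemma sumabs_cont : Continuous (fun x : E => ∑ i, |x i|) := by
  refine continuous_finset_sum _ (fun i _ => ?_)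
  exact (continuous_abs.comp ((EuclideanSpace.proj i).continuous))

lemma eucl_norm_eq (x : E) : ‖x‖ = Real.sqrt (∑ i, x i ^ 2) := by
  rw [EuclideanSpace.norm_eq]; simp [sq_abs]

lemma abs_le_norm (x : E) (i : Fin d) : |x i| ≤ ‖x‖ := by
  rw [eucl_norm_eq, ← Real.sqrt_sq_eq_abs]
  apply Real.sqrt_le_sqrt
  exact Finset.single_le_sum (f := fun j => x j ^ 2) (fun j _ => sq_nonneg _) (Finset.mem_univ i)

lemma norm_le_sumabs (x : E) : ‖x‖ ≤ ∑ i, |x i| := by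
  rw [eucl_norm_eq]
  refine Real.sqrt_le_sqrt ?_ |>.trans (Real.sqrt_sq (by positivity)).le
  calc ∑ i, x i ^ 2 = ∑ i, |x i| ^ 2 := by simp [sq_abs]
    _ ≤ (∑ i, |x i|) ^ 2 := Finset.sum_sq_le_sq_sum_of_nonneg (fun i _ => abs_nonneg _)

lemma normsq_eq (x : E) : ‖x‖ ^ 2 = ∑ i, x i ^ 2 := by
  rw [eucl_norm_eq, Real.sq_sqrt (by positivity)]


lemma isClosed_S : IsClosed (Sball d) := isClosed_le sumabs_cont continuous_const

lemma isCompact_S : IsCompact (Sball d) := by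
  apply Metric.isCompact_of_isClosed_isBounded isClosed_S
  apply Bornology.IsBounded.subset (Metric.isBounded_closedBall (x := (0:E)) (r := 1))
  intro x hx
  simp only [Metric.mem_closedBall, dist_zero_right]
  exact (norm_le_sumabs x).trans hx

lemma measure_S_lt_top : volume (Sball d) < ⊤ := isCompact_S.measure_lt_top

lemma measure_S_pos (hd : 0 < d) : 0 < volume (Sball d) := by
  have h : Metric.ball (0 : E) (1/d) ⊆ Sball d := by
    intro x hx
    simp only [Metric.mem_ball, dist_zero_right] at hx
    have : ∑ i, |x i| ≤ ∑ _i : Fin d, ‖x‖ := Finset.sum_le_sum (fun i _ => abs_le_norm x i)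
    refine this.trans ?_
    rw [Finset.sum_const, Finset.card_univ, Fintype.card_fin, nsmul_eq_mul]
    calc (d : ℝ) * ‖x‖ ≤ d * (1/d) := by
          apply mul_le_mul_of_nonneg_left hx.le (by positivity)
      _ = 1 := by field_simp
  calc (0:ENNReal) < volume (Metric.ball (0 : E) (1/d)) := by
        exact Metric.measure_ball_pos _ _ (by positivity)
    _ ≤ _ := measure_mono h

lemma smul_sub_mem (i : Fin d) {t : ℝ} (ht0 : 0 < t) (ht1 : t < 1) {x : E}
    (hx : x ∈ Sball d) (hxi : t < x i) :
    x ∈ (t • EuclideanSpace.single i (1:ℝ)) +ᵥ ((1 - t) • Sball d) := by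
  rw [Set.mem_vadd_set_iff_neg_vadd_mem]
  rw [Set.mem_smul_set_iff_inv_smul_mem₀ (by linarith : (1:ℝ) - t ≠ 0)]
  show ∑ j, |((1-t)⁻¹ • (-(t • EuclideanSpace.single i (1:ℝ)) + x)) j| ≤ 1
  have key : ∑ j, |(-(t • EuclideanSpace.single i (1:ℝ)) + x) j| ≤ 1 - t := by
    have hsum : ∑ j, |(-(t • EuclideanSpace.single i (1:ℝ)) + x) j|
        = |x i - t| + ∑ j ∈ Finset.univ.erase i, |x j| := by
      rw [← Finset.add_sum_erase _ _ (Finset.mem_univ i)]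
      congr 1
      · simp [EuclideanSpace.single_apply, PiLp.smul_apply, PiLp.add_apply, PiLp.neg_apply]
        rw [neg_add_eq_sub]
      · apply Finset.sum_congr rfl
        intro j hj
        simp [EuclideanSpace.single_apply, (Finset.mem_erase.mp hj).1, PiLp.smul_apply,
          PiLp.add_apply, PiLp.neg_apply]
    rw [hsum, abs_of_pos (by linarith)]
    have h2 : ∑ j ∈ Finset.univ.erase i, |x j| = (∑ j, |x j|) - |x i| := by
      rw [← Finset.add_sum_erase _ _ (Finset.mem_univ i)]; ring
    have h3 : x i ≤ |x i| := le_abs_self _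
    have h4 : ∑ j, |x j| ≤ 1 := hx
    rw [h2]; linarith
  calc ∑ j, |((1-t)⁻¹ • (-(t • EuclideanSpace.single i (1:ℝ)) + x)) j|
      = (1-t)⁻¹ * ∑ j, |(-(t • EuclideanSpace.single i (1:ℝ)) + x) j| := by
        rw [Finset.mul_sum]
        apply Finset.sum_congr rfl
        intro j _
        rw [PiLp.smul_apply, smul_eq_mul, abs_mul, abs_of_pos (inv_pos.mpr (by linarith) : (0:ℝ) < (1-t)⁻¹)]
    _ ≤ (1-t)⁻¹ * (1 - t) := by
        apply mul_le_mul_of_nonneg_left key ((inv_pos.mpr (by linarith : (0:ℝ) < 1-t)).le)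
    _ = 1 := by rw [inv_mul_cancel₀ (by linarith)]

lemma vol_vadd (v : E) (s : Set E) : volume (v +ᵥ s) = volume s := by
  rw [← Set.image_vadd]
  have : (fun x => v +ᵥ x) '' s = (fun x => v + x) '' s := rfl
  rw [this, Set.image_add_left, measure_preimage_add]

lemma tail_pos (i : Fin d) {t : ℝ} (ht0 : 0 < t) (ht1 : t < 1) :
    volume ({x : E | t < x i} ∩ Sball d) ≤ ENNReal.ofReal ((1-t)^d) * volume (Sball d) := by
  have hsub : {x : E | t < x i} ∩ Sball d
      ⊆ (t • EuclideanSpace.single i (1:ℝ)) +ᵥ ((1 - t) • Sball d) := by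
    rintro x ⟨hxi, hx⟩
    exact smul_sub_mem i ht0 ht1 hx hxi
  calc volume ({x : E | t < x i} ∩ Sball d)
      ≤ volume ((t • EuclideanSpace.single i (1:ℝ)) +ᵥ ((1 - t) • Sball d)) :=
        measure_mono hsub
    _ = volume ((1 - t) • Sball d) := vol_vadd _ _
    _ = ENNReal.ofReal ((1-t)^d) * volume (Sball d) := by
        rw [Measure.addHaar_smul_of_nonneg volume (by linarith) (Sball d),
          finrank_euclideanSpace_fin]

lemma tail_abs (i : Fin d) {t : ℝ} (ht0 : 0 < t) (ht1 : t < 1) :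
    volume ({x : E | t < |x i|} ∩ Sball d)
      ≤ 2 * ENNReal.ofReal ((1-t)^d) * volume (Sball d) := by
  have hneg : {x : E | t < -(x i)} ∩ Sball d = -({x : E | t < x i} ∩ Sball d) := by
    ext x
    simp only [Set.mem_neg, Set.mem_inter_iff, Set.mem_setOf_eq]
    constructor
    · rintro ⟨h1, h2⟩
      refine ⟨by simpa using h1, ?_⟩
      show ∑ j, |(-x) j| ≤ 1
      simpa [abs_neg, Sball] using h2
    · rintro ⟨h1, h2⟩
      refine ⟨by simpa using h1, ?_⟩
      have : ∑ j, |(-x) j| ≤ 1 := h2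
      simpa [abs_neg, Sball] using this
  have hunion : {x : E | t < |x i|} ∩ Sball d
      ⊆ ({x : E | t < x i} ∩ Sball d) ∪ ({x : E | t < -(x i)} ∩ Sball d) := by
    rintro x ⟨hxi, hx⟩
    have hxi' : t < |x i| := hxi
    rcases abs_cases (x i) with ⟨h, _⟩ | ⟨h, _⟩
    · exact Or.inl ⟨show t < x i by rwa [h] at hxi', hx⟩
    · exact Or.inr ⟨show t < -(x i) by rwa [h] at hxi', hx⟩
  calc volume ({x : E | t < |x i|} ∩ Sball d)
      ≤ volume (({x : E | t < x i} ∩ Sball d) ∪ ({x : E | t < -(x i)} ∩ Sball d)) :=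
        measure_mono hunion
    _ ≤ volume ({x : E | t < x i} ∩ Sball d) + volume ({x : E | t < -(x i)} ∩ Sball d) :=
        measure_union_le _ _
    _ = 2 * volume ({x : E | t < x i} ∩ Sball d) := by
        rw [hneg, Measure.measure_neg, two_mul]
    _ ≤ 2 * (ENNReal.ofReal ((1-t)^d) * volume (Sball d)) := by
        exact mul_le_mul_right (tail_pos i ht0 ht1) 2
    _ = 2 * ENNReal.ofReal ((1-t)^d) * volume (Sball d) := by ring

-- the 1-d integral computation
lemma int_one (d : ℕ) :
    ∫ t in (0:ℝ)..1, 2*t*(1-t)^d = 2*(1/((d:ℝ)+1) - 1/((d:ℝ)+2)) := by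
  have h : ∫ t in (0:ℝ)..1, 2*t*(1-t)^d = ∫ u in (0:ℝ)..1, 2*(1-u)*u^d := by
    have := intervalIntegral.integral_comp_sub_left (a := 0) (b := 1)
      (fun u : ℝ => 2*(1-u)*u^d) 1
    simp only [sub_zero, sub_self] at this
    rw [← this]
    apply intervalIntegral.integral_congr
    intro t ht
    simp only
    ring_nf
  rw [h]
  have : ∀ u : ℝ, 2*(1-u)*u^d = 2*u^d - 2*u^(d+1) := by intro u; ring
  simp_rw [this]
  rw [intervalIntegral.integral_sub, intervalIntegral.integral_const_mul,
    intervalIntegral.integral_const_mul, integral_pow, integral_pow]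
  · push_cast; field_simp; ring
  · exact (intervalIntegral.intervalIntegrable_pow d).const_mul 2
  · exact (intervalIntegral.intervalIntegrable_pow (d+1)).const_mul 2

lemma int_sqrt (d : ℕ) :
    ∫ t in (0:ℝ)..1, 2*(1-Real.sqrt t)^d = 2*(2*(1/((d:ℝ)+1) - 1/((d:ℝ)+2))) := by
  have key : ∫ x in (0:ℝ)..1, (2*x) • ((fun u => 2*(1-Real.sqrt u)^d) ∘ (fun x => x^2)) x
      = ∫ u in (0:ℝ)..1, 2*(1-Real.sqrt u)^d := by
    have := intervalIntegral.integral_comp_smul_deriv (a := (0:ℝ)) (b := 1)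
      (f := fun x => x^2) (f' := fun x => 2*x) (g := fun u => 2*(1-Real.sqrt u)^d)
      (fun x _ => by simpa [mul_comm] using (hasDerivAt_pow 2 x))
      (by fun_prop)
      (continuous_const.mul ((continuous_const.sub Real.continuous_sqrt).pow d))
    simpa using this
  rw [← key]
  have congr1 : ∀ x ∈ Set.uIcc (0:ℝ) 1,
      (2*x) • ((fun u => 2*(1-Real.sqrt u)^d) ∘ (fun x => x^2)) x = 2*(2*x*(1-x)^d) := by
    intro x hx
    rw [Set.uIcc_of_le (by norm_num)] at hx
    simp only [Function.comp, smul_eq_mul]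
    rw [Real.sqrt_sq hx.1]
    ring
  rw [intervalIntegral.integral_congr congr1, intervalIntegral.integral_const_mul, int_one]

lemma abs_le_one_of_mem {x : E} (hx : x ∈ Sball d) (i : Fin d) : |x i| ≤ 1 := by
  refine le_trans ?_ hx
  exact Finset.single_le_sum (f := fun j => |x j|) (fun j _ => abs_nonneg _) (Finset.mem_univ i)

lemma coord_lintegral_bound (i : Fin d) :
    ∫⁻ x in Sball d, ENNReal.ofReal ((x i)^2)
      ≤ ENNReal.ofReal (4*(1/((d:ℝ)+1) - 1/((d:ℝ)+2))) * volume (Sball d) := by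
  have hmS : MeasurableSet (Sball d) := (isClosed_S (d := d)).measurableSet
  have hproj : Measurable (fun x : E => x i) := (EuclideanSpace.proj i).continuous.measurable
  have hlc := lintegral_eq_lintegral_meas_lt (volume.restrict (Sball d))
    (f := fun x : E => (x i)^2) (ae_of_all _ (fun x => sq_nonneg (x i)))
    ((hproj.pow_const 2).aemeasurable)
  rw [hlc]
  have hbound : ∀ t ∈ Ioi (0:ℝ), (volume.restrict (Sball d)) {a : E | t < (a i)^2}
      ≤ (Ioo (0:ℝ) 1).indicator
          (fun t => ENNReal.ofReal (2*(1-Real.sqrt t)^d) * volume (Sball d)) t := by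
    intro t ht
    have htm : MeasurableSet {a : E | t < (a i)^2} :=
      measurableSet_lt measurable_const (hproj.pow_const 2)
    rw [Measure.restrict_apply htm]
    by_cases ht1 : t < 1
    · have hst0 : 0 < Real.sqrt t := Real.sqrt_pos.mpr ht
      have hst1 : Real.sqrt t < 1 := by
        rw [show (1:ℝ) = Real.sqrt 1 by simp]
        exact Real.sqrt_lt_sqrt (le_of_lt ht) ht1
      have hsub : {a : E | t < (a i)^2} ∩ Sball d
          ⊆ {x : E | Real.sqrt t < |x i|} ∩ Sball d := by
        rintro a ⟨ha, haS⟩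
        refine ⟨?_, haS⟩
        have : Real.sqrt t < Real.sqrt ((a i)^2) := Real.sqrt_lt_sqrt (le_of_lt ht) ha
        rwa [Real.sqrt_sq_eq_abs] at this
      rw [Set.indicator_of_mem (by exact ⟨ht, ht1⟩ : t ∈ Ioo (0:ℝ) 1)]
      calc volume ({a : E | t < (a i)^2} ∩ Sball d)
          ≤ volume ({x : E | Real.sqrt t < |x i|} ∩ Sball d) := measure_mono hsub
        _ ≤ 2 * ENNReal.ofReal ((1-Real.sqrt t)^d) * volume (Sball d) :=
            tail_abs i hst0 hst1
        _ = ENNReal.ofReal (2*(1-Real.sqrt t)^d) * volume (Sball d) := by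
            rw [ENNReal.ofReal_mul (by norm_num), ENNReal.ofReal_ofNat]
    · have hempty : {a : E | t < (a i)^2} ∩ Sball d = ∅ := by
        ext a
        simp only [Set.mem_inter_iff, Set.mem_setOf_eq, Set.mem_empty_iff_false, iff_false,
          not_and]
        intro ha haS
        have h1 : |a i| ≤ 1 := abs_le_one_of_mem haS i
        have : (a i)^2 ≤ 1 := by
          rw [← sq_abs]; nlinarith [abs_nonneg (a i)]
        linarith [not_lt.mp ht1]
      rw [hempty]
      simp
  calc ∫⁻ t in Ioi (0:ℝ), (volume.restrict (Sball d)) {a : E | t < (a i)^2}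
      ≤ ∫⁻ t in Ioi (0:ℝ), (Ioo (0:ℝ) 1).indicator
          (fun t => ENNReal.ofReal (2*(1-Real.sqrt t)^d) * volume (Sball d)) t :=
        setLIntegral_mono_ae
          ((((continuous_const.mul ((continuous_const.sub
              Real.continuous_sqrt).pow d)).measurable.ennreal_ofReal.mul_const
              (volume (Sball d))).indicator measurableSet_Ioo).aemeasurable)
          (ae_of_all _ hbound)
    _ = ∫⁻ t in Ioo (0:ℝ) 1, ENNReal.ofReal (2*(1-Real.sqrt t)^d) * volume (Sball d) := by
        rw [lintegral_indicator measurableSet_Ioo, Measure.restrict_restrict measurableSet_Ioo]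
        congr 1
        rw [Set.inter_eq_left.mpr Ioo_subset_Ioi_self]
    _ = (∫⁻ t in Ioo (0:ℝ) 1, ENNReal.ofReal (2*(1-Real.sqrt t)^d)) * volume (Sball d) := by
        exact lintegral_mul_const'' (volume (Sball d))
          (f := fun t => ENNReal.ofReal (2*(1-Real.sqrt t)^d))
          ((continuous_const.mul ((continuous_const.sub
            Real.continuous_sqrt).pow d)).measurable.ennreal_ofReal.aemeasurable)
    _ ≤ ENNReal.ofReal (4*(1/((d:ℝ)+1) - 1/((d:ℝ)+2))) * volume (Sball d) := by
        apply mul_le_mul_left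
        have hcont : Continuous (fun t : ℝ => 2*(1-Real.sqrt t)^d) :=
          continuous_const.mul ((continuous_const.sub Real.continuous_sqrt).pow d)
        have hint : IntegrableOn (fun t : ℝ => 2*(1-Real.sqrt t)^d) (Ioo 0 1) :=
          (hcont.integrableOn_Icc (a := 0) (b := 1)).mono_set Set.Ioo_subset_Icc_self
        have hnn : 0 ≤ᵐ[volume.restrict (Ioo (0:ℝ) 1)] (fun t : ℝ => 2*(1-Real.sqrt t)^d) := by
          refine ae_restrict_of_forall_mem measurableSet_Ioo (fun t ht => ?_)
          have h1 : Real.sqrt t ≤ 1 := by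
            rw [show (1:ℝ) = Real.sqrt 1 by simp]
            exact Real.sqrt_le_sqrt ht.2.le
          have h2 : (0:ℝ) ≤ 1 - Real.sqrt t := by linarith
          positivity
        rw [← ofReal_integral_eq_lintegral_ofReal hint hnn]
        apply ENNReal.ofReal_le_ofReal
        apply le_of_eq
        rw [← MeasureTheory.integral_Ioc_eq_integral_Ioo,
          ← intervalIntegral.integral_of_le (by norm_num : (0:ℝ) ≤ 1), int_sqrt d]
        ring

lemma coord_integral_bound (i : Fin d) :
    ∫ x in Sball d, (x i)^2 ≤ 4*(1/((d:ℝ)+1) - 1/((d:ℝ)+2)) * (volume (Sball d)).toReal := by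
  have hproj : Measurable (fun x : E => x i) := (EuclideanSpace.proj i).continuous.measurable
  have hc : (0:ℝ) ≤ 4*(1/((d:ℝ)+1) - 1/((d:ℝ)+2)) := by
    have h1 : 1/((d:ℝ)+2) ≤ 1/((d:ℝ)+1) := by
      apply one_div_le_one_div_of_le <;> [positivity; linarith]
    linarith
  have heq := MeasureTheory.integral_eq_lintegral_of_nonneg_ae
    (μ := volume.restrict (Sball d)) (f := fun x : E => (x i)^2)
    (ae_of_all _ (fun x => sq_nonneg (x i)))
    ((hproj.pow_const 2).aestronglyMeasurable)
  rw [heq]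
  have hle := coord_lintegral_bound i
  have hfin : ENNReal.ofReal (4*(1/((d:ℝ)+1) - 1/((d:ℝ)+2))) * volume (Sball d) ≠ ⊤ :=
    ENNReal.mul_ne_top ENNReal.ofReal_ne_top (measure_S_lt_top (d := d)).ne
  calc (∫⁻ x in Sball d, ENNReal.ofReal ((x i)^2)).toReal
      ≤ (ENNReal.ofReal (4*(1/((d:ℝ)+1) - 1/((d:ℝ)+2))) * volume (Sball d)).toReal :=
        ENNReal.toReal_mono hfin hle
    _ = 4*(1/((d:ℝ)+1) - 1/((d:ℝ)+2)) * (volume (Sball d)).toReal := by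
        rw [ENNReal.toReal_mul, ENNReal.toReal_ofReal hc]

lemma normsq_integral_bound (hd : 0 < d) :
    ∫ x in Sball d, ‖x‖^2 ≤ (4/(d:ℝ)) * (volume (Sball d)).toReal := by
  have hint : ∀ i : Fin d, IntegrableOn (fun x : E => (x i)^2) (Sball d) := by
    intro i
    exact (((EuclideanSpace.proj (𝕜 := ℝ) i).continuous.pow 2).continuousOn).integrableOn_compact
      (isCompact_S (d := d))
  have heq : ∫ x in Sball d, ‖x‖^2 = ∑ i, ∫ x in Sball d, (x i)^2 := by
    rw [← integral_finset_sum _ (fun i _ => hint i)]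
    apply MeasureTheory.integral_congr_ae
    exact ae_of_all _ (fun x => normsq_eq x)
  rw [heq]
  have hd' : (0:ℝ) < d := by exact_mod_cast hd
  calc ∑ i, ∫ x in Sball d, (x i)^2
      ≤ ∑ _i : Fin d, 4*(1/((d:ℝ)+1) - 1/((d:ℝ)+2)) * (volume (Sball d)).toReal :=
        Finset.sum_le_sum (fun i _ => coord_integral_bound i)
    _ = d * (4*(1/((d:ℝ)+1) - 1/((d:ℝ)+2)) * (volume (Sball d)).toReal) := by
        rw [Finset.sum_const, Finset.card_univ, Fintype.card_fin, nsmul_eq_mul]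
    _ ≤ (4/(d:ℝ)) * (volume (Sball d)).toReal := by
        rw [← mul_assoc]
        apply mul_le_mul_of_nonneg_right _ ENNReal.toReal_nonneg
        rw [show (d:ℝ) * (4 * (1/((d:ℝ)+1) - 1/((d:ℝ)+2)))
            = 4*(d:ℝ)*(((d:ℝ)+1)*((d:ℝ)+2))⁻¹ by field_simp; ring]
        rw [← div_eq_mul_inv, div_le_div_iff₀ (by positivity) hd']
        nlinarith [hd']



end L1BallAux

open L1BallAux in
/-- Lemma 1 of Akhavan et al. 2022: If `ẽ` is uniform on the unit ℓ₁-ball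
`B₁^d(1) = {x : Σ|xᵢ| ≤ 1}`, then `E[‖ẽ‖₂] ≤ 2/√d`. -/
theorem l1ball_expected_l2norm {d : ℕ} (hd : 0 < d) :
    ⨍ y in {x : EuclideanSpace ℝ (Fin d) | ∑ i, |x i| ≤ 1}, ‖y‖ ≤ 2 / Real.sqrt d := by
  have hS : {x : EuclideanSpace ℝ (Fin d) | ∑ i, |x i| ≤ 1} = L1BallAux.Sball d := rfl
  rw [hS]
  have hd' : (0:ℝ) < d := by exact_mod_cast hd
  have hsd : (0:ℝ) < Real.sqrt d := Real.sqrt_pos.mpr hd'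
  have hsq : Real.sqrt d ^ 2 = (d:ℝ) := Real.sq_sqrt hd'.le
  have hμ : (0:ℝ) < (volume (L1BallAux.Sball d)).toReal :=
    ENNReal.toReal_pos (L1BallAux.measure_S_pos hd).ne' (L1BallAux.measure_S_lt_top (d := d)).ne
  have hint1 : IntegrableOn (fun x : EuclideanSpace ℝ (Fin d) => ‖x‖) (L1BallAux.Sball d) :=
    (continuous_norm.continuousOn).integrableOn_compact (L1BallAux.isCompact_S (d := d))
  have hint2 : IntegrableOn (fun x : EuclideanSpace ℝ (Fin d) => ‖x‖^2) (L1BallAux.Sball d) :=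
    ((continuous_norm.pow 2).continuousOn).integrableOn_compact (L1BallAux.isCompact_S (d := d))
  have hpt : ∀ x : EuclideanSpace ℝ (Fin d),
      ‖x‖ ≤ (Real.sqrt d/4) * ‖x‖^2 + 1/Real.sqrt d := by
    intro x
    have key : Real.sqrt d * ((Real.sqrt d/4) * ‖x‖^2 + 1/Real.sqrt d - ‖x‖)
        = (Real.sqrt d * ‖x‖ - 2)^2/4 := by
      field_simp
      ring
    nlinarith [key, sq_nonneg (Real.sqrt d * ‖x‖ - 2), hsd]
  have hIbound : ∫ x in L1BallAux.Sball d, ‖x‖ ≤ (2/Real.sqrt d) * (volume (L1BallAux.Sball d)).toReal := by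
    have hintR : IntegrableOn
        (fun x : EuclideanSpace ℝ (Fin d) => (Real.sqrt d/4) * ‖x‖^2 + 1/Real.sqrt d)
        (L1BallAux.Sball d) := by
      apply Integrable.add (hint2.const_mul _)
      exact integrableOn_const (L1BallAux.measure_S_lt_top (d := d)).ne
    calc ∫ x in L1BallAux.Sball d, ‖x‖
        ≤ ∫ x in L1BallAux.Sball d, ((Real.sqrt d/4) * ‖x‖^2 + 1/Real.sqrt d) :=
          integral_mono hint1 hintR hpt
      _ = (Real.sqrt d/4) * (∫ x in L1BallAux.Sball d, ‖x‖^2)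
          + (1/Real.sqrt d) * (volume (L1BallAux.Sball d)).toReal := by
          rw [integral_add (hint2.const_mul _) (integrableOn_const (L1BallAux.measure_S_lt_top (d := d)).ne),
            MeasureTheory.integral_const_mul, setIntegral_const, smul_eq_mul, measureReal_def]
          ring
      _ ≤ (Real.sqrt d/4) * ((4/(d:ℝ)) * (volume (L1BallAux.Sball d)).toReal)
          + (1/Real.sqrt d) * (volume (L1BallAux.Sball d)).toReal := by
          have hB := L1BallAux.normsq_integral_bound hd
          have h4 : (0:ℝ) ≤ Real.sqrt d/4 := by positivity
          exact add_le_add_left (mul_le_mul_of_nonneg_left hB h4) _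
      _ = (2/Real.sqrt d) * (volume (L1BallAux.Sball d)).toReal := by
          have hkey : Real.sqrt d/4 * (4/(d:ℝ)) = 1/Real.sqrt d := by
            rw [div_mul_div_comm, div_eq_div_iff (by positivity) hsd.ne']
            nlinarith [hsq]
          rw [← mul_assoc, hkey]
          ring
  rw [setAverage_eq]
  rw [smul_eq_mul]
  calc ((volume (L1BallAux.Sball d)).toReal)⁻¹ * ∫ x in L1BallAux.Sball d, ‖x‖
      ≤ ((volume (L1BallAux.Sball d)).toReal)⁻¹ * ((2/Real.sqrt d) * (volume (L1BallAux.Sball d)).toReal) := by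
        apply mul_le_mul_of_nonneg_left hIbound (by positivity)
    _ = 2/Real.sqrt d := by
        field_simp
end

section
/- Let f : ℝ^d → ℝ be convex and M₂-Lipschitz in the Euclidean norm, and let ẽ be uniformly distributed on the unit ℓ₁-ball B₁^d(1). Define f_γ(x) := E[f(x + γ ẽ)] for γ > 0. Then for all x, f(x) ≤ f_γ(x) ≤ f(x) + (2/√d) γ M₂. -/
open MeasureTheory Pointwise intervalIntegral

namespace SmoothingL1Aux

variable {d : ℕ}

local notation "E" => EuclideanSpace ℝ (Fin d)

def B (d : ℕ) : Set (EuclideanSpace ℝ (Fin d)) := {z | ∑ i, |z i| ≤ 1}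

lemma coord_le (z : E) (i : Fin d) : |z i| ≤ ‖z‖ := by
  rw [EuclideanSpace.norm_eq, show |z i| = Real.sqrt ((z i)^2) from (Real.sqrt_sq_eq_abs _).symm]
  apply Real.sqrt_le_sqrt
  have h : (z i)^2 = ‖z i‖^2 := by simp [Real.norm_eq_abs]
  rw [h]
  exact Finset.single_le_sum (fun j _ => sq_nonneg ‖z j‖) (Finset.mem_univ i)

lemma l1norm (z : E) : ‖z‖ ≤ ∑ i, |z i| := by
  rw [EuclideanSpace.norm_eq]
  rw [show ∑ i, |z i| = Real.sqrt ((∑ i, |z i|)^2) from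
    (Real.sqrt_sq (Finset.sum_nonneg fun i _ => abs_nonneg _)).symm]
  apply Real.sqrt_le_sqrt
  calc ∑ i, ‖z i‖^2 = ∑ i, |z i|^2 := by simp [Real.norm_eq_abs]
    _ ≤ (∑ i, |z i|)^2 := Finset.sum_sq_le_sq_sum_of_nonneg (fun i _ => abs_nonneg _)

lemma isClosed_B : IsClosed (B d) :=
  isClosed_le (continuous_finset_sum _ fun i _ => (show Continuous fun z : E => z i by fun_prop).abs) continuous_const

lemma measurableSet_B : MeasurableSet (B d) := isClosed_B.measurableSet

lemma isCompact_B : IsCompact (B d) := by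
  have hsub : B d ⊆ Metric.closedBall 0 1 := by
    intro z hz
    simpa [Metric.mem_closedBall, dist_zero_right] using (l1norm z).trans hz
  exact Metric.isCompact_of_isClosed_isBounded isClosed_B
    (Metric.isBounded_closedBall.subset hsub)

lemma volB_ne_top : volume (B d) ≠ ⊤ := isCompact_B.measure_lt_top.ne

lemma volB_ne_zero (hd : 0 < d) : volume (B d) ≠ 0 := by
  have hsub : Metric.ball (0 : E) (1/d) ⊆ B d := by
    intro z hz
    simp only [Metric.mem_ball, dist_zero_right] at hz
    have h1 : ∑ i, |z i| ≤ ∑ _i : Fin d, ‖z‖ := Finset.sum_le_sum fun i _ => coord_le z i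
    have h2 : (d:ℝ) * ‖z‖ ≤ d * (1/d) :=
      mul_le_mul_of_nonneg_left (le_of_lt hz) (by positivity)
    have h3 : (d:ℝ) * (1/d) = 1 := by
      rw [mul_one_div, div_self (by positivity : (d:ℝ) ≠ 0)]
    show ∑ i, |z i| ≤ 1
    calc ∑ i, |z i| ≤ ∑ _i : Fin d, ‖z‖ := h1
      _ = d * ‖z‖ := by simp [mul_comm]
      _ ≤ 1 := h3 ▸ h2
  intro h
  exact (Metric.measure_ball_pos volume (0:E) (by positivity : (0:ℝ) < 1/d)).ne'
    (measure_mono_null hsub h)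

lemma volB_pos_toReal (hd : 0 < d) : 0 < (volume (B d)).toReal :=
  ENNReal.toReal_pos (volB_ne_zero hd) volB_ne_top

/-- Symmetry: the integral of the identity over `B` vanishes. -/
lemma integral_id_B : ∫ z in B d, z = (0 : E) := by
  have hind : ∀ z : E, (B d).indicator (id : E → E) (-z) = -((B d).indicator id z) := by
    intro z
    have hmem : (-z ∈ B d) ↔ z ∈ B d := by
      simp only [B, Set.mem_setOf_eq]
      constructor <;> intro h <;> simpa using h
    by_cases hz : z ∈ B d
    · rw [Set.indicator_of_mem (hmem.2 hz), Set.indicator_of_mem hz]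
      rfl
    · rw [Set.indicator_of_notMem (fun h => hz (hmem.1 h)), Set.indicator_of_notMem hz, neg_zero]
  have h1 : ∫ z in B d, z = ∫ z, (B d).indicator id z :=
    (MeasureTheory.integral_indicator measurableSet_B).symm
  have h2 : ∫ z, (B d).indicator (id : E → E) z
      = ∫ z, (B d).indicator (id : E → E) (-z) :=
    (integral_neg_eq_self (fun z => (B d).indicator (id : E → E) z) volume).symm
  have h3 : ∫ z, (B d).indicator (id : E → E) (-z) = -∫ z, (B d).indicator (id : E → E) z := by
    rw [show (fun z : E => (B d).indicator (id : E → E) (-z))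
        = fun z : E => -((B d).indicator id z) from funext hind, MeasureTheory.integral_neg]
  have h4 : ∫ z, (B d).indicator (id : E → E) z = 0 := by
    have := h2.trans h3
    have h5 : (2:ℝ) • ∫ z, (B d).indicator (id : E → E) z = 0 := by
      rw [two_smul]
      nth_rewrite 1 [this]
      simp
    simpa using (smul_eq_zero.mp h5).resolve_left (by norm_num)
  rw [h1, h4]

section Slice

lemma slice_eq (i : Fin d) {s : ℝ} (h0 : 0 ≤ s) (h1 : s < 1) :
    {z : E | z ∈ B d ∧ s < z i} =
      (s • (EuclideanSpace.single i (1:ℝ))) +ᵥ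
        ((1-s) • {z : E | z ∈ B d ∧ 0 < z i}) := by
  have hs : (0:ℝ) < 1 - s := by linarith
  ext x
  simp only [Set.mem_vadd_set, Set.mem_smul_set, Set.mem_setOf_eq, vadd_eq_add, B]
  constructor
  · rintro ⟨hsum, hxi⟩
    set y : E := (1-s)⁻¹ • (x - s • EuclideanSpace.single i (1:ℝ)) with hy
    have hyco : ∀ j, y j = (1-s)⁻¹ * (x j - s * (if j = i then 1 else 0)) := by
      intro j; simp [hy, EuclideanSpace.single_apply]
    refine ⟨(1-s) • y, ⟨y, ⟨?_, ?_⟩, rfl⟩, ?_⟩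
    · have key : ∀ j, |y j| = (1-s)⁻¹ * (|x j| - (if j = i then s else 0)) := by
        intro j
        rw [hyco j, abs_mul, abs_of_pos (inv_pos.2 hs)]
        congr 1
        by_cases hj : j = i
        · subst hj
          simp only [eq_self_iff_true, if_true, mul_one]
          rw [abs_of_nonneg (by linarith), abs_of_nonneg (by linarith)]
        · simp [hj]
      calc ∑ j, |y j| = ∑ j, (1-s)⁻¹ * (|x j| - (if j = i then s else 0)) :=
            Finset.sum_congr rfl fun j _ => key j
        _ = (1-s)⁻¹ * ((∑ j, |x j|) - s) := by
            rw [← Finset.mul_sum, Finset.sum_sub_distrib, Finset.sum_ite_eq' Finset.univ i]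
            simp
        _ ≤ (1-s)⁻¹ * (1 - s) :=
            mul_le_mul_of_nonneg_left (by linarith) (le_of_lt (inv_pos.2 hs))
        _ = 1 := inv_mul_cancel₀ hs.ne'
    · rw [hyco i]
      simp only [eq_self_iff_true, if_true, mul_one]
      exact mul_pos (inv_pos.2 hs) (by linarith)
    · rw [smul_inv_smul₀ hs.ne']
      abel
  · rintro ⟨w, ⟨y, ⟨hysum, hyi⟩, rfl⟩, rfl⟩
    have hco : ∀ j, (s • EuclideanSpace.single i (1:ℝ) + (1-s) • y) j
        = s * (if j = i then 1 else 0) + (1-s) * y j := by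
      intro j; simp [EuclideanSpace.single_apply]
    constructor
    · have key : ∀ j, |(s • EuclideanSpace.single i (1:ℝ) + (1-s) • y) j|
          = (if j = i then s else 0) + (1-s) * |y j| := by
        intro j
        rw [hco j]
        by_cases hj : j = i
        · subst hj
          simp only [eq_self_iff_true, if_true, mul_one]
          rw [abs_of_nonneg (by nlinarith), abs_of_pos hyi]
        · simp only [if_neg hj, mul_zero, zero_add]
          rw [abs_mul, abs_of_pos hs]
      calc ∑ j, |(s • EuclideanSpace.single i (1:ℝ) + (1-s) • y) j|
          = ∑ j, ((if j = i then s else 0) + (1-s) * |y j|) :=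
            Finset.sum_congr rfl fun j _ => key j
        _ = s + (1-s) * ∑ j, |y j| := by
            rw [Finset.sum_add_distrib, Finset.sum_ite_eq' Finset.univ i, ← Finset.mul_sum]
            simp
        _ ≤ s + (1-s) * 1 := by nlinarith
        _ = 1 := by ring
    · rw [hco i]
      simp only [eq_self_iff_true, if_true, mul_one]
      nlinarith

lemma slice_measure (i : Fin d) {s : ℝ} (h0 : 0 ≤ s) (h1 : s < 1) :
    volume {z : E | z ∈ B d ∧ s < z i}
      = ENNReal.ofReal ((1-s)^d) * volume {z : E | z ∈ B d ∧ 0 < z i} := by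
  rw [slice_eq i h0 h1, measure_vadd, Measure.addHaar_smul_of_nonneg volume (by linarith),
    finrank_euclideanSpace, Fintype.card_fin]

lemma neg_slice (i : Fin d) (s : ℝ) :
    {z : E | z ∈ B d ∧ z i < -s} = -{z : E | z ∈ B d ∧ s < z i} := by
  ext z
  simp only [Set.mem_neg, Set.mem_setOf_eq, B]
  constructor
  · rintro ⟨h1, h2⟩
    refine ⟨by simpa using h1, ?_⟩
    simpa using by linarith
  · rintro ⟨h1, h2⟩
    refine ⟨by simpa using h1, ?_⟩
    simp only [PiLp.neg_apply] at h2
    linarith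

lemma neg_slice_measure (i : Fin d) (s : ℝ) :
    volume {z : E | z ∈ B d ∧ z i < -s} = volume {z : E | z ∈ B d ∧ s < z i} := by
  rw [neg_slice, Measure.measure_neg]

lemma coord_hyperplane_null (i : Fin d) : volume {z : E | z i = 0} = 0 := by
  have : {z : E | z i = 0} =
      (LinearMap.ker ((LinearMap.proj i).comp
        (WithLp.linearEquiv 2 ℝ (Fin d → ℝ)).toLinearMap) : Set E) := by
    ext z; simp [LinearMap.mem_ker]
  rw [this]
  apply Measure.addHaar_submodule
  intro h
  have : EuclideanSpace.single i (1:ℝ) ∈ LinearMap.ker ((LinearMap.proj i).comp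
      (WithLp.linearEquiv 2 ℝ (Fin d → ℝ)).toLinearMap) := h ▸ Submodule.mem_top
  simp [LinearMap.mem_ker, EuclideanSpace.single_apply] at this

lemma measurable_coord (i : Fin d) : Measurable fun z : E => z i :=
  (measurable_pi_apply i).comp (WithLp.measurable_ofLp 2 _)

lemma measurableSet_pos (i : Fin d) : MeasurableSet {z : E | z ∈ B d ∧ 0 < z i} := by
  have : {z : E | z ∈ B d ∧ 0 < z i} = B d ∩ {z : E | 0 < z i} := by
    ext z; simp [Set.mem_inter_iff]
  rw [this]
  exact measurableSet_B.inter (measurableSet_lt measurable_const (measurable_coord i))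

lemma half_measure (i : Fin d) :
    volume (B d) = 2 * volume {z : E | z ∈ B d ∧ 0 < z i} := by
  set P := {z : E | z ∈ B d ∧ 0 < z i} with hP
  set N := {z : E | z ∈ B d ∧ z i < 0} with hN
  have hNmeas : MeasurableSet N := by
    have : N = B d ∩ {z : E | z i < 0} := by ext z; simp [hN, Set.mem_inter_iff]
    rw [this]
    exact measurableSet_B.inter (measurableSet_lt (measurable_coord i) measurable_const)
  have hdisj : Disjoint P N := by
    rw [Set.disjoint_left]
    rintro z ⟨_, h1⟩ ⟨_, h2⟩
    linarith
  have hPN : volume (P ∪ N) = volume P + volume N :=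
    measure_union hdisj hNmeas
  have hNP : volume N = volume P := by
    have := neg_slice_measure i 0
    simpa [neg_zero] using this
  have hcover : B d ⊆ (P ∪ N) ∪ {z : E | z i = 0} := by
    intro z hz
    rcases lt_trichotomy (z i) 0 with h | h | h
    · exact Or.inl (Or.inr ⟨hz, h⟩)
    · exact Or.inr h
    · exact Or.inl (Or.inl ⟨hz, h⟩)
  have hsub : P ∪ N ⊆ B d := by
    rintro z (⟨hz, _⟩ | ⟨hz, _⟩) <;> exact hz
  have hle : volume (B d) ≤ volume P + volume N := by
    calc volume (B d) ≤ volume ((P ∪ N) ∪ {z : E | z i = 0}) := measure_mono hcover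
      _ ≤ volume (P ∪ N) + volume {z : E | z i = 0} := measure_union_le _ _
      _ = volume P + volume N := by rw [coord_hyperplane_null i, add_zero, hPN]
  have hge : volume P + volume N ≤ volume (B d) := by
    rw [← hPN]; exact measure_mono hsub
  rw [le_antisymm hle hge, hNP, two_mul]

lemma sq_le_one_of_mem_B {z : E} (hz : z ∈ B d) (i : Fin d) : (z i)^2 ≤ 1 := by
  have h1 : |z i| ≤ 1 :=
    le_trans (Finset.single_le_sum (fun j _ => abs_nonneg (z j)) (Finset.mem_univ i)) hz
  calc (z i)^2 = |z i|^2 := (sq_abs _).symm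
    _ ≤ 1^2 := by nlinarith [abs_nonneg (z i)]
    _ = 1 := one_pow 2

lemma slab_measure (hd : 0 < d) (i : Fin d) {t : ℝ} (ht0 : 0 < t) (ht1 : t ≤ 1) :
    volume {z : E | z ∈ B d ∧ t < (z i)^2}
      = ENNReal.ofReal ((1 - Real.sqrt t)^d) * volume (B d) := by
  rcases eq_or_lt_of_le ht1 with rfl | ht1
  · have hempty : {z : E | z ∈ B d ∧ 1 < (z i)^2} = ∅ := by
      ext z
      simp only [Set.mem_setOf_eq, Set.mem_empty_iff_false, iff_false, not_and, not_lt]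
      exact fun hz => sq_le_one_of_mem_B hz i
    rw [hempty, Real.sqrt_one, sub_self, zero_pow hd.ne', ENNReal.ofReal_zero, zero_mul,
      measure_empty]
  · have hst0 : 0 < Real.sqrt t := Real.sqrt_pos.2 ht0
    have hst1 : Real.sqrt t < 1 := by
      rw [show (1:ℝ) = Real.sqrt 1 from Real.sqrt_one.symm]
      exact Real.sqrt_lt_sqrt ht0.le ht1
    have hsplit : {z : E | z ∈ B d ∧ t < (z i)^2}
        = {z : E | z ∈ B d ∧ Real.sqrt t < z i} ∪ {z : E | z ∈ B d ∧ z i < -Real.sqrt t} := by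
      ext z
      simp only [Set.mem_setOf_eq, Set.mem_union]
      constructor
      · rintro ⟨hz, h⟩
        have habs : Real.sqrt t < |z i| := by
          have := Real.sqrt_lt_sqrt ht0.le h
          rwa [Real.sqrt_sq_eq_abs] at this
        rcases lt_abs.1 habs with h' | h'
        · exact Or.inl ⟨hz, h'⟩
        · exact Or.inr ⟨hz, by linarith⟩
      · rintro (⟨hz, h⟩ | ⟨hz, h⟩) <;> refine ⟨hz, ?_⟩
        · calc t = Real.sqrt t ^ 2 := (Real.sq_sqrt ht0.le).symm
            _ < (z i)^2 := by nlinarith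
        · calc t = Real.sqrt t ^ 2 := (Real.sq_sqrt ht0.le).symm
            _ < (z i)^2 := by nlinarith
    have hdisj : Disjoint {z : E | z ∈ B d ∧ Real.sqrt t < z i}
        {z : E | z ∈ B d ∧ z i < -Real.sqrt t} := by
      rw [Set.disjoint_left]
      rintro z ⟨_, h1⟩ ⟨_, h2⟩
      linarith
    have hmeas2 : MeasurableSet {z : E | z ∈ B d ∧ z i < -Real.sqrt t} := by
      have : {z : E | z ∈ B d ∧ z i < -Real.sqrt t} = B d ∩ {z : E | z i < -Real.sqrt t} := by
        ext z; simp [Set.mem_inter_iff]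
      rw [this]
      exact measurableSet_B.inter (measurableSet_lt (measurable_coord i) measurable_const)
    rw [hsplit, measure_union hdisj hmeas2, neg_slice_measure i,
      slice_measure i hst0.le hst1, half_measure i]
    ring

lemma Jaux (k : ℕ) : ∫ u in (0:ℝ)..1, (1-u)^k = 1/(k+1) := by
  have := integral_comp_sub_left (a := (0:ℝ)) (b := 1) (fun v => v^k) 1
  simp only [sub_self, sub_zero] at this
  rw [this, integral_pow]
  simp

lemma Jval : ∫ t in (0:ℝ)..1, (1 - Real.sqrt t)^d = 2 / (((d:ℝ)+1)*((d:ℝ)+2)) := by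
  have hsub : ∫ u in (0:ℝ)..1, (2*u) • ((fun t => (1 - Real.sqrt t)^d) ∘ (fun u => u^2)) u
      = ∫ t in (0:ℝ)..1, (1 - Real.sqrt t)^d := by
    have := integral_comp_smul_deriv (a := (0:ℝ)) (b := 1) (f := fun u => u^2)
      (f' := fun u => 2*u) (g := fun t => (1 - Real.sqrt t)^d)
      (fun x _ => by simpa [mul_comm] using hasDerivAt_pow 2 x)
      (by fun_prop) (by fun_prop)
    simpa using this
  rw [← hsub]
  have hcong : ∫ u in (0:ℝ)..1, (2*u) • ((fun t => (1 - Real.sqrt t)^d) ∘ (fun u => u^2)) u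
      = ∫ u in (0:ℝ)..1, (2*(1-u)^d - 2*(1-u)^(d+1)) := by
    apply integral_congr
    intro u hu
    rw [Set.uIcc_of_le (by norm_num)] at hu
    simp only [Function.comp, smul_eq_mul]
    rw [Real.sqrt_sq hu.1, pow_succ]
    ring
  have c1 : Continuous fun u : ℝ => 2*(1-u)^d := by fun_prop
  have c2 : Continuous fun u : ℝ => 2*(1-u)^(d+1) := by fun_prop
  rw [hcong, integral_sub (c1.intervalIntegrable _ _) (c2.intervalIntegrable _ _),
    intervalIntegral.integral_const_mul, intervalIntegral.integral_const_mul, Jaux, Jaux]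
  have h1 : ((d:ℝ)+1) ≠ 0 := by positivity
  have h2 : ((d:ℝ)+2) ≠ 0 := by positivity
  push_cast
  field_simp
  ring

lemma moment (hd : 0 < d) (i : Fin d) :
    ∫ z in B d, (z i)^2 = (2/(((d:ℝ)+1)*((d:ℝ)+2))) * (volume (B d)).toReal := by
  have hcont : Continuous fun z : E => (z i)^2 := by
    have h : Continuous fun z : E => z i := by fun_prop
    exact h.pow 2
  have hint : IntegrableOn (fun z : E => (z i)^2) (B d) volume :=
    hcont.continuousOn.integrableOn_compact isCompact_B
  rw [show ∫ z in B d, (z i)^2 = ∫ z, (z i)^2 ∂(volume.restrict (B d)) from rfl,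
    Integrable.integral_eq_integral_meas_lt hint
      (Filter.Eventually.of_forall fun z => sq_nonneg _)]
  have key : ∀ t ∈ Set.Ioi (0:ℝ), ((volume.restrict (B d)) {a : E | t < (a i)^2}).toReal
      = Set.indicator (Set.Ioc (0:ℝ) 1)
          (fun t => (1 - Real.sqrt t)^d * (volume (B d)).toReal) t := by
    intro t ht
    rw [Set.mem_Ioi] at ht
    have hmeas : MeasurableSet {a : E | t < (a i)^2} :=
      measurableSet_lt measurable_const ((measurable_coord i).pow_const 2)
    rw [Measure.restrict_apply hmeas]
    have hset : {a : E | t < (a i)^2} ∩ B d = {z : E | z ∈ B d ∧ t < (z i)^2} := by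
      ext z; simp [Set.mem_inter_iff, and_comm]
    rw [hset]
    by_cases ht1 : t ≤ 1
    · rw [Set.indicator_of_mem (Set.mem_Ioc.2 ⟨ht, ht1⟩), slab_measure hd i ht ht1,
        ENNReal.toReal_mul, ENNReal.toReal_ofReal]
      have h1 : Real.sqrt t ≤ 1 := by
        rw [show (1:ℝ) = Real.sqrt 1 from Real.sqrt_one.symm]
        exact Real.sqrt_le_sqrt ht1
      have h2 : (0:ℝ) ≤ 1 - Real.sqrt t := by linarith
      positivity
    · push_neg at ht1
      rw [Set.indicator_of_notMem (by simp [Set.mem_Ioc]; intro _; linarith)]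
      have hempty : {z : E | z ∈ B d ∧ t < (z i)^2} = ∅ := by
        ext z
        simp only [Set.mem_setOf_eq, Set.mem_empty_iff_false, iff_false, not_and, not_lt]
        exact fun hz => (sq_le_one_of_mem_B hz i).trans ht1.le
      rw [hempty, measure_empty]
      simp
  simp only [measureReal_def]
  rw [setIntegral_congr_fun measurableSet_Ioi key,
    MeasureTheory.setIntegral_indicator measurableSet_Ioc,
    show Set.Ioi (0:ℝ) ∩ Set.Ioc 0 1 = Set.Ioc 0 1 by
      ext u; simp only [Set.mem_inter_iff, Set.mem_Ioi, Set.mem_Ioc]; tauto,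
    MeasureTheory.integral_mul_const,
    show ∫ t in Set.Ioc (0:ℝ) 1, (1 - Real.sqrt t)^d
      = ∫ t in (0:ℝ)..1, (1 - Real.sqrt t)^d from (integral_of_le (by norm_num)).symm,
    Jval]

end Slice

lemma normsq_eq (z : E) : ‖z‖^2 = ∑ i, (z i)^2 := by
  rw [EuclideanSpace.norm_eq, Real.sq_sqrt (Finset.sum_nonneg fun i _ => sq_nonneg _)]
  exact Finset.sum_congr rfl fun i _ => by simp [Real.norm_eq_abs, sq_abs]

lemma integral_normsq (hd : 0 < d) :
    ∫ z in B d, ‖z‖^2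
      = (d:ℝ) * (2/(((d:ℝ)+1)*((d:ℝ)+2))) * (volume (B d)).toReal := by
  have hint : ∀ i : Fin d, IntegrableOn (fun z : E => (z i)^2) (B d) volume := fun i =>
    ((show Continuous fun z : E => z i by fun_prop).pow 2).continuousOn.integrableOn_compact
      isCompact_B
  calc ∫ z in B d, ‖z‖^2 = ∫ z in B d, ∑ i, (z i)^2 := by
        exact setIntegral_congr_fun measurableSet_B fun z _ => normsq_eq z
    _ = ∑ i, ∫ z in B d, (z i)^2 := integral_finset_sum _ fun i _ => hint i
    _ = ∑ _i : Fin d, (2/(((d:ℝ)+1)*((d:ℝ)+2))) * (volume (B d)).toReal :=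
        Finset.sum_congr rfl fun i _ => moment hd i
    _ = (d:ℝ) * (2/(((d:ℝ)+1)*((d:ℝ)+2))) * (volume (B d)).toReal := by
        rw [Finset.sum_const, Finset.card_univ, Fintype.card_fin, nsmul_eq_mul, mul_assoc]

lemma avg_normsq_le (hd : 0 < d) : ⨍ z in B d, ‖z‖^2 ≤ 2/(d:ℝ) := by
  have hV : 0 < (volume (B d)).toReal := volB_pos_toReal hd
  rw [setAverage_eq, integral_normsq hd, smul_eq_mul]
  have hle : (d:ℝ) * (2/(((d:ℝ)+1)*((d:ℝ)+2))) ≤ 2/(d:ℝ) := by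
    have hd' : (0:ℝ) < d := by exact_mod_cast hd
    rw [mul_div_assoc', div_le_div_iff₀ (by positivity) hd']
    nlinarith
  calc (volume (B d)).toReal⁻¹ * ((d:ℝ) * (2/(((d:ℝ)+1)*((d:ℝ)+2))) * (volume (B d)).toReal)
      = (d:ℝ) * (2/(((d:ℝ)+1)*((d:ℝ)+2))) * ((volume (B d)).toReal⁻¹ * (volume (B d)).toReal) := by
        ring
    _ = (d:ℝ) * (2/(((d:ℝ)+1)*((d:ℝ)+2))) := by
        rw [inv_mul_cancel₀ hV.ne', mul_one]
    _ ≤ 2/(d:ℝ) := hle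

lemma avg_norm_le (hd : 0 < d) : ⨍ z in B d, ‖z‖ ≤ 2 / Real.sqrt d := by
  have hd' : (0:ℝ) < d := by exact_mod_cast hd
  have hfi : IntegrableOn (fun z : E => ‖z‖^2) (B d) volume :=
    (continuous_norm.pow 2).continuousOn.integrableOn_compact isCompact_B
  have hgi : IntegrableOn (fun z : E => Real.sqrt (‖z‖^2)) (B d) volume :=
    (Real.continuous_sqrt.comp (continuous_norm.pow 2)).continuousOn.integrableOn_compact
      isCompact_B
  have jensen := (Real.strictConcaveOn_sqrt.concaveOn).le_map_set_average
    (f := fun z : E => ‖z‖^2) Real.continuous_sqrt.continuousOn isClosed_Ici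
    (volB_ne_zero hd) volB_ne_top
    (Filter.Eventually.of_forall fun z => Set.mem_Ici.2 (sq_nonneg _)) hfi hgi
  have hEq : (fun z : E => Real.sqrt (‖z‖^2)) = fun z : E => ‖z‖ :=
    funext fun z => Real.sqrt_sq (norm_nonneg z)
  have h1 : ⨍ z in B d, ‖z‖ ≤ Real.sqrt (⨍ z in B d, ‖z‖^2) := by
    have := jensen
    rwa [show (⨍ z in B d, Real.sqrt (‖z‖^2)) = ⨍ z in B d, ‖z‖ by rw [hEq]] at this
  have h2 : Real.sqrt (⨍ z in B d, ‖z‖^2) ≤ Real.sqrt (4/(d:ℝ)) := by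
    apply Real.sqrt_le_sqrt
    calc ⨍ z in B d, ‖z‖^2 ≤ 2/(d:ℝ) := avg_normsq_le hd
      _ ≤ 4/(d:ℝ) := by gcongr; norm_num
  have h3 : Real.sqrt (4/(d:ℝ)) = 2 / Real.sqrt d := by
    rw [Real.sqrt_div (by norm_num : (0:ℝ) ≤ 4) d,
      show Real.sqrt 4 = 2 by
        rw [show (4:ℝ) = 2^2 by norm_num, Real.sqrt_sq (by norm_num : (0:ℝ) ≤ 2)]]
  exact h1.trans (h2.trans_eq h3)

end SmoothingL1Aux

open SmoothingL1Aux in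
/-- Lemma 1, smoothing via L₁ randomization: If `f` is convex and
`M₂`-Lipschitz in the Euclidean norm and `ẽ` is uniform on the unit ℓ₁-ball, then
`f x ≤ f_γ x ≤ f x + (2/√d) γ M₂`, where `f_γ x = E[f (x + γ ẽ)]`. -/
theorem smoothing_sandwich_L1 {d : ℕ} (hd : 0 < d) (f : EuclideanSpace ℝ (Fin d) → ℝ)
    (M₂ : ℝ) (hconv : ConvexOn ℝ Set.univ f)
    (hf : ∀ x y : EuclideanSpace ℝ (Fin d), |f y - f x| ≤ M₂ * ‖y - x‖)
    (γ : ℝ) (hγ : 0 < γ) (x : EuclideanSpace ℝ (Fin d)) :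
    f x ≤ (⨍ e in {z : EuclideanSpace ℝ (Fin d) | ∑ i, |z i| ≤ 1}, f (x + γ • e)) ∧
      (⨍ e in {z : EuclideanSpace ℝ (Fin d) | ∑ i, |z i| ≤ 1}, f (x + γ • e)) ≤
        f x + (2 / Real.sqrt d) * γ * M₂ := by
  have hBset : {z : EuclideanSpace ℝ (Fin d) | ∑ i, |z i| ≤ 1} = B d := rfl
  rw [hBset]
  have hV : 0 < (volume (B d)).toReal := volB_pos_toReal hd
  -- M₂ is nonnegative
  have hM2 : 0 ≤ M₂ := by
    have h := hf x (x + EuclideanSpace.single (⟨0, hd⟩ : Fin d) (1:ℝ))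
    rw [add_sub_cancel_left, EuclideanSpace.norm_single] at h
    simp only [norm_one, mul_one] at h
    exact (abs_nonneg _).trans h
  -- f is continuous
  have hcont : Continuous f := by
    apply (LipschitzWith.of_dist_le_mul (K := M₂.toNNReal) (f := f) ?_).continuous
    intro a b
    rw [Real.dist_eq, dist_eq_norm, Real.coe_toNNReal M₂ hM2]
    exact hf b a
  -- integrability facts
  have hint_aff : IntegrableOn (fun e : EuclideanSpace ℝ (Fin d) => x + γ • e) (B d) volume :=
    (continuous_const.add (continuous_id.const_smul γ)).continuousOn.integrableOn_compact
      isCompact_B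
  have hint_comp : IntegrableOn (fun e : EuclideanSpace ℝ (Fin d) => f (x + γ • e)) (B d)
      volume :=
    (hcont.comp (continuous_const.add (continuous_id.const_smul γ))).continuousOn.integrableOn_compact
      isCompact_B
  have hint_id : IntegrableOn (fun e : EuclideanSpace ℝ (Fin d) => e) (B d) volume :=
    continuous_id.continuousOn.integrableOn_compact isCompact_B
  have hint_norm : IntegrableOn (fun e : EuclideanSpace ℝ (Fin d) => ‖e‖) (B d) volume :=
    continuous_norm.continuousOn.integrableOn_compact isCompact_B
  have hconst : IntegrableOn (fun _ : EuclideanSpace ℝ (Fin d) => f x) (B d) volume :=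
    integrableOn_const isCompact_B.measure_lt_top.ne
  -- average of the affine map
  have hint_smul : IntegrableOn (fun e : EuclideanSpace ℝ (Fin d) => γ • e) (B d) volume :=
    hint_id.smul γ
  have havg : (⨍ e in B d, (x + γ • e)) = x := by
    have hI : ∫ e in B d, (x + γ • e) = (volume (B d)).toReal • x := by
      rw [MeasureTheory.integral_add (integrableOn_const (C := x) isCompact_B.measure_lt_top.ne) hint_smul,
        MeasureTheory.integral_smul, integral_id_B, smul_zero, add_zero, setIntegral_const, measureReal_def]
    rw [setAverage_eq, measureReal_def, hI, smul_smul, inv_mul_cancel₀ hV.ne', one_smul]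
  constructor
  · -- lower bound via Jensen
    have jensen := hconv.map_set_average_le hcont.continuousOn isClosed_univ
      (volB_ne_zero hd) volB_ne_top
      (Filter.Eventually.of_forall fun e => Set.mem_univ _) hint_aff hint_comp
    rwa [havg] at jensen
  · -- upper bound via Lipschitz
    have hpt : ∀ e ∈ B d, f (x + γ • e) ≤ f x + (M₂ * γ) * ‖e‖ := by
      intro e _
      have h := hf x (x + γ • e)
      rw [add_sub_cancel_left, norm_smul, Real.norm_eq_abs, abs_of_pos hγ] at h
      have := (le_abs_self (f (x + γ • e) - f x)).trans h
      linarith [this]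
    have hrhs : IntegrableOn
        (fun e : EuclideanSpace ℝ (Fin d) => f x + (M₂ * γ) * ‖e‖) (B d) volume :=
      hconst.add ((hint_norm.const_mul (M₂ * γ)))
    have hmono : ∫ e in B d, f (x + γ • e) ≤ ∫ e in B d, (f x + (M₂ * γ) * ‖e‖) :=
      setIntegral_mono_on hint_comp hrhs measurableSet_B hpt
    have hIrhs : ∫ e in B d, (f x + (M₂ * γ) * ‖e‖)
        = (volume (B d)).toReal * f x + (M₂ * γ) * ∫ e in B d, ‖e‖ := by
      rw [integral_add hconst ((hint_norm.const_mul (M₂ * γ))), setIntegral_const,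
        MeasureTheory.integral_const_mul, smul_eq_mul, measureReal_def]
    have havgnorm : (⨍ e in B d, ‖e‖) ≤ 2 / Real.sqrt d := avg_norm_le hd
    have hfinal : (⨍ e in B d, f (x + γ • e))
        ≤ f x + (M₂ * γ) * ⨍ e in B d, ‖e‖ := by
      rw [setAverage_eq, setAverage_eq, smul_eq_mul, smul_eq_mul]
      calc (volume (B d)).toReal⁻¹ * ∫ e in B d, f (x + γ • e)
          ≤ (volume (B d)).toReal⁻¹ * ((volume (B d)).toReal * f x
              + (M₂ * γ) * ∫ e in B d, ‖e‖) := by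
            apply mul_le_mul_of_nonneg_left (hmono.trans_eq hIrhs) (by positivity)
        _ = f x + (M₂ * γ) * ((volume (B d)).toReal⁻¹ * ∫ e in B d, ‖e‖) := by
            field_simp
    calc (⨍ e in B d, f (x + γ • e)) ≤ f x + (M₂ * γ) * ⨍ e in B d, ‖e‖ := hfinal
      _ ≤ f x + (M₂ * γ) * (2 / Real.sqrt d) := by
          have := mul_le_mul_of_nonneg_left havgnorm (by positivity : (0:ℝ) ≤ M₂ * γ)
          linarith
      _ = f x + (2 / Real.sqrt d) * γ * M₂ := by ring
end
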